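/- Let n₁, m, n₂, q be positive integers with 1 < n₁ < m, gcd(m, n₁) = 1, n₂ > 1, gcd(q, n₂) = 1. The conductor of the numerical semigroup Γ generated by n₁n₂, mn₂, and mn₁n₂ + q equals n₂(mn₁n₂ + q) - (m + n₁)n₂ - q + 1. -/

import Mathlib

/-- Membership in the closure of a triple. -/
lemma mem_closure_triple {a b c x : ℕ} :
    x ∈ AddSubmonoid.closure ({a, b, c} : Set ℕ) ↔
      ∃ i j k : ℕ, x = i * a + j * b + k * c := by
  constructor
  · intro hx
    induction hx using AddSubmonoid.closure_induction with
    | mem y hy =>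
      rcases hy with rfl | rfl | rfl
      · exact ⟨1, 0, 0, by ring⟩
      · exact ⟨0, 1, 0, by ring⟩
      · exact ⟨0, 0, 1, by ring⟩
    | zero => exact ⟨0, 0, 0, by simp⟩
    | add u v hu hv ihu ihv =>
      obtain ⟨i1, j1, k1, rfl⟩ := ihu
      obtain ⟨i2, j2, k2, rfl⟩ := ihv
      exact ⟨i1 + i2, j1 + j2, k1 + k2, by ring⟩
  · rintro ⟨i, j, k, rfl⟩
    have ha : a ∈ AddSubmonoid.closure ({a, b, c} : Set ℕ) :=
      AddSubmonoid.subset_closure (by simp)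
    have hb : b ∈ AddSubmonoid.closure ({a, b, c} : Set ℕ) :=
      AddSubmonoid.subset_closure (by simp)
    have hc : c ∈ AddSubmonoid.closure ({a, b, c} : Set ℕ) :=
      AddSubmonoid.subset_closure (by simp)
    have h1 : i * a = i • a := by simp
    have h2 : j * b = j • b := by simp
    have h3 : k * c = k • c := by simp
    exact add_mem (add_mem (h1 ▸ AddSubmonoid.nsmul_mem _ ha i)
      (h2 ▸ AddSubmonoid.nsmul_mem _ hb j)) (h3 ▸ AddSubmonoid.nsmul_mem _ hc k)

/-- Chicken McNugget : every `y ≥ (p-1)(m-1)` is representable by coprime `p, m`. -/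
lemma mcnugget {p m : ℕ} (hp : 1 < p) (hm : 1 < m) (hco : Nat.Coprime m p) {y : ℕ}
    (hy : (p - 1) * (m - 1) ≤ y) : ∃ a b : ℕ, y = a * p + b * m := by
  obtain ⟨s, -, hs⟩ := Nat.exists_mul_mod_eq_one_of_coprime hco hp
  set b := y * s % p with hb
  have hblt : b < p := Nat.mod_lt _ (by omega)
  -- b * m ≡ y [MOD p]
  have h1 : b ≡ y * s [MOD p] := Nat.mod_modEq _ _
  have h2 : b * m ≡ y * s * m [MOD p] := h1.mul_right m
  have h3 : m * s ≡ 1 [MOD p] := by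
    unfold Nat.ModEq
    rw [hs, Nat.mod_eq_of_lt hp]
  have h4 : y * (m * s) ≡ y * 1 [MOD p] := h3.mul_left y
  have h5 : b * m ≡ y [MOD p] := by
    calc b * m ≡ y * s * m [MOD p] := h2
      _ = y * (m * s) := by ring
      _ ≡ y * 1 [MOD p] := h4
      _ = y := by ring
  have hdvd : (p : ℤ) ∣ (y : ℤ) - b * m := h5.dvd
  obtain ⟨t, ht⟩ := hdvd
  -- bound: y ≥ (p-1)(m-1), b ≤ p-1, so y - b*m > -p, hence t ≥ 0
  have hyz : ((p : ℤ) - 1) * ((m : ℤ) - 1) ≤ y := by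
    have : (((p - 1) * (m - 1) : ℕ) : ℤ) ≤ (y : ℤ) := by exact_mod_cast hy
    rwa [Nat.cast_mul, Nat.cast_sub (by omega), Nat.cast_sub (by omega),
      Nat.cast_one] at this
  have hbm : (b : ℤ) * m ≤ ((p : ℤ) - 1) * m := by
    have hb' : (b : ℤ) < p := by exact_mod_cast hblt
    have : (b : ℤ) ≤ (p : ℤ) - 1 := by linarith
    exact mul_le_mul_of_nonneg_right this (by positivity)
  have hpos : (0 : ℤ) < p := by exact_mod_cast (show 0 < p by omega)
  have ht0 : 0 ≤ t := by
    by_contra h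
    push_neg at h
    have : (p : ℤ) * t ≤ -p := by nlinarith
    nlinarith
  refine ⟨t.toNat, b, ?_⟩
  have htn : (t.toNat : ℤ) = t := Int.toNat_of_nonneg ht0
  have : (y : ℤ) = (t.toNat : ℤ) * p + b * m := by rw [htn]; linarith
  exact_mod_cast this

set_option maxHeartbeats 1000000 in
/-- The conductor of the numerical semigroup generated by `n₁n₂`, `mn₂` and `mn₁n₂+q`
equals `n₂(mn₁n₂+q) - (m+n₁)n₂ - q + 1`. -/
theorem stmt5 (n₁ m n₂ q : ℕ) (h1 : 1 < n₁) (h2 : n₁ < m) (hco : Nat.Coprime m n₁)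
    (h3 : 1 < n₂) (hq : 0 < q) (hqn : Nat.Coprime q n₂) :
    ∃ c : ℕ,
      IsLeast {c : ℕ | ∀ x : ℕ, c ≤ x →
        x ∈ AddSubmonoid.closure ({n₁ * n₂, m * n₂, m * n₁ * n₂ + q} : Set ℕ)} c ∧
      (c : ℤ) = (n₂ : ℤ) * (m * n₁ * n₂ + q) - (m + n₁) * n₂ - q + 1 := by
  set G : ℕ := m * n₁ * n₂ + q with hG
  have hK2 : 2 ≤ (n₁ - 1) * (m - 1) := by
    have : 1 ≤ n₁ - 1 := by omega
    have : 2 ≤ m - 1 := by omega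
    nlinarith
  set K : ℕ := (n₁ - 1) * (m - 1) - 1 with hKdef
  set c : ℕ := (n₂ - 1) * G + K * n₂ + 1 with hc
  -- cast helpers
  have hKz : (K : ℤ) = (n₁ : ℤ) * m - n₁ - m := by
    rw [hKdef]
    have h1' : (1 : ℕ) ≤ n₁ := by omega
    have h2' : (1 : ℕ) ≤ m := by omega
    rw [Nat.cast_sub (by omega), Nat.cast_mul, Nat.cast_sub h1', Nat.cast_sub h2']
    push_cast
    ring
  have hGz : (G : ℤ) = (m : ℤ) * n₁ * n₂ + q := by rw [hG]; push_cast; ring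
  have hcz : (c : ℤ) = ((n₂ : ℤ) - 1) * G + K * n₂ + 1 := by
    rw [hc]
    rw [Nat.cast_add, Nat.cast_add, Nat.cast_mul, Nat.cast_mul,
      Nat.cast_sub (by omega : (1:ℕ) ≤ n₂)]
    push_cast
    ring
  -- the key non-membership : c - 1 is not in the semigroup
  have hnotmem : (n₂ - 1) * G + K * n₂ ∉
      AddSubmonoid.closure ({n₁ * n₂, m * n₂, m * n₁ * n₂ + q} : Set ℕ) := by
    rw [← hG, mem_closure_triple]
    rintro ⟨i, j, k, heq⟩
    -- cast the equation to ℤ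
    have heqz : ((n₂ : ℤ) - 1) * G + K * n₂ =
        i * (n₁ * n₂) + j * (m * n₂) + k * G := by
      have := congrArg (Nat.cast : ℕ → ℤ) heq
      rw [Nat.cast_add, Nat.cast_mul, Nat.cast_mul,
        Nat.cast_sub (by omega : (1:ℕ) ≤ n₂)] at this
      push_cast at this ⊢
      linarith
    have hGpos : (0 : ℤ) < G := by
      rw [hGz]
      have hq' : (0:ℤ) < q := by exact_mod_cast hq
      have hmn : (0:ℤ) ≤ (m:ℤ) * n₁ * n₂ := by positivity
      linarith
    have hn2pos : (0 : ℤ) < n₂ := by exact_mod_cast (show 0 < n₂ by omega)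
    -- K * n₂ < G
    have hKG : (K : ℤ) * n₂ < G := by
      rw [hKz, hGz]
      have hm1 : (1:ℤ) ≤ n₁ := by exact_mod_cast h1.le
      have hq1 : (0:ℤ) < q := by exact_mod_cast hq
      nlinarith
    -- k < n₂
    have hklt : (k : ℤ) < n₂ := by
      have hkG : (k : ℤ) * G ≤ ((n₂ : ℤ) - 1) * G + K * n₂ := by
        have p1 : (0:ℤ) ≤ (i:ℤ) * (n₁ * n₂) := by positivity
        have p2 : (0:ℤ) ≤ (j:ℤ) * (m * n₂) := by positivity
        linarith [heqz]
      by_contra h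
      push_neg at h
      have h8 : (n₂ : ℤ) * G ≤ (k : ℤ) * G := mul_le_mul_of_nonneg_right h hGpos.le
      linarith
    -- n₂ ∣ (n₂ - 1 - k) * q
    have hdvd : (n₂ : ℤ) ∣ ((n₂ : ℤ) - 1 - k) * q := by
      refine ⟨i * n₁ + j * m + k * m * n₁ - ((n₂ : ℤ) - 1) * m * n₁
        - ((n₁ : ℤ) * m - n₁ - m), ?_⟩
      rw [hGz, hKz] at heqz
      linear_combination heqz
    have hcop : IsCoprime (n₂ : ℤ) (q : ℤ) :=
      Nat.isCoprime_iff_coprime.mpr hqn.symm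
    have hdvd2 : (n₂ : ℤ) ∣ ((n₂ : ℤ) - 1 - k) := hcop.dvd_of_dvd_mul_right hdvd
    have hk0 : (0 : ℤ) ≤ k := by positivity
    have hzero : ((n₂ : ℤ) - 1 - k) = 0 :=
      Int.eq_zero_of_abs_lt_dvd hdvd2 (by rw [abs_lt]; constructor <;> linarith)
    -- so k = n₂ - 1, and then i*n₁ + j*m = K
    have hij : (i : ℤ) * n₁ + j * m = K := by
      have hk : (k : ℤ) = (n₂ : ℤ) - 1 := by linarith
      rw [hk, hGz] at heqz
      have hfac : ((i : ℤ) * n₁ + j * m - K) * n₂ = 0 := by linarith [heqz]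
      have := mul_eq_zero.mp hfac
      rcases this with h | h
      · linarith
      · exfalso; linarith
    -- mod n₁: n₁ ∣ (j+1)*m
    have hdvd3 : (n₁ : ℤ) ∣ ((j : ℤ) + 1) * m := by
      refine ⟨(m : ℤ) - 1 - i, ?_⟩
      rw [hKz] at hij
      linarith [hij]
    have hcop2 : IsCoprime (n₁ : ℤ) (m : ℤ) :=
      Nat.isCoprime_iff_coprime.mpr hco.symm
    have hdvd4 : (n₁ : ℤ) ∣ ((j : ℤ) + 1) := hcop2.dvd_of_dvd_mul_right hdvd3
    have hj0 : (0 : ℤ) ≤ j := by positivity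
    have hjge : (n₁ : ℤ) ≤ (j : ℤ) + 1 := Int.le_of_dvd (by linarith) hdvd4
    have hi0 : (0 : ℤ) ≤ i := by positivity
    have hn1z : (1 : ℤ) < n₁ := by exact_mod_cast h1
    have hmz : (0 : ℤ) < m := by exact_mod_cast (show 0 < m by omega)
    rw [hKz] at hij
    nlinarith [mul_le_mul_of_nonneg_right (by linarith : (n₁ : ℤ) - 1 ≤ (j:ℤ)) hmz.le]
  -- membership for all x ≥ c
  have hmem : ∀ x : ℕ, c ≤ x →
      x ∈ AddSubmonoid.closure ({n₁ * n₂, m * n₂, m * n₁ * n₂ + q} : Set ℕ) := by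
    intro x hx
    obtain ⟨s, -, hs⟩ := Nat.exists_mul_mod_eq_one_of_coprime hqn h3
    set d : ℕ := x * s % n₂ with hd
    have hdlt : d < n₂ := Nat.mod_lt _ (by omega)
    have hh1 : d ≡ x * s [MOD n₂] := Nat.mod_modEq _ _
    have hh2 : d * q ≡ x * s * q [MOD n₂] := hh1.mul_right q
    have hh3 : q * s ≡ 1 [MOD n₂] := by
      unfold Nat.ModEq; rw [hs, Nat.mod_eq_of_lt h3]
    have hh4 : x * (q * s) ≡ x * 1 [MOD n₂] := hh3.mul_left x
    have hh5 : d * q ≡ x [MOD n₂] := by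
      calc d * q ≡ x * s * q [MOD n₂] := hh2
        _ = x * (q * s) := by ring
        _ ≡ x * 1 [MOD n₂] := hh4
        _ = x := by ring
    have hdvd : (n₂ : ℤ) ∣ (x : ℤ) - d * q := hh5.dvd
    have hdvdG : (n₂ : ℤ) ∣ (x : ℤ) - d * G := by
      obtain ⟨w, hw⟩ := hdvd
      refine ⟨w - (d : ℤ) * m * n₁, ?_⟩
      rw [hGz]
      linarith [hw]
    obtain ⟨t, ht⟩ := hdvdG
    have hn2pos : (0 : ℤ) < n₂ := by exact_mod_cast (show 0 < n₂ by omega)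
    have hGpos : (0 : ℤ) < G := by
      rw [hGz]
      have hq' : (0:ℤ) < q := by exact_mod_cast hq
      have hmn : (0:ℤ) ≤ (m:ℤ) * n₁ * n₂ := by positivity
      linarith
    have hxz : (c : ℤ) ≤ x := by exact_mod_cast hx
    have hdG : (d : ℤ) * G ≤ ((n₂ : ℤ) - 1) * G := by
      have : (d : ℤ) ≤ (n₂ : ℤ) - 1 := by
        have : (d : ℤ) < n₂ := by exact_mod_cast hdlt
        linarith
      exact mul_le_mul_of_nonneg_right this hGpos.le
    -- t ≥ K + 1 = (n₁-1)(m-1)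
    have htbig : (K : ℤ) + 1 ≤ t := by
      have h6 : (K : ℤ) * n₂ + 1 ≤ (n₂ : ℤ) * t := by
        rw [← ht]
        rw [hcz] at hxz
        linarith
      by_contra h
      push_neg at h
      have : t ≤ (K : ℤ) := by linarith
      have : (n₂ : ℤ) * t ≤ (n₂ : ℤ) * K := mul_le_mul_of_nonneg_left this hn2pos.le
      nlinarith
    have ht0 : 0 ≤ t := by
      have : (0:ℤ) ≤ (K:ℤ) := by positivity
      linarith
    -- y := t.toNat is representable by n₁, m
    have hyK : (n₁ - 1) * (m - 1) ≤ t.toNat := by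
      have h7 : ((n₁ - 1) * (m - 1) : ℕ) = K + 1 := by omega
      have : ((K : ℤ) + 1) ≤ (t.toNat : ℤ) := by
        rw [Int.toNat_of_nonneg ht0]; exact htbig
      omega
    obtain ⟨a, b, hab⟩ := mcnugget h1 (h1.trans h2) hco hyK
    rw [mem_closure_triple]
    refine ⟨a, b, d, ?_⟩
    have habz : (t.toNat : ℤ) = a * n₁ + b * m := by exact_mod_cast hab
    rw [Int.toNat_of_nonneg ht0] at habz
    have : (x : ℤ) = a * (n₁ * n₂) + b * (m * n₂) + d * G := by
      rw [habz] at ht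
      linarith [ht]
    rw [hG] at this
    exact_mod_cast this
  refine ⟨c, ⟨hmem, ?_⟩, ?_⟩
  · -- lower bound
    intro c' hc'
    by_contra h
    push_neg at h
    have hle : c' ≤ (n₂ - 1) * G + K * n₂ := by omega
    exact hnotmem (hc' _ hle)
  · -- value of c
    rw [hcz, hGz, hKz]
    push_cast
    ring
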